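/- For every update family 𝒰, the stable set 𝒮(𝒰) is a finite (possibly empty) union of closed arcs of S¹ both of whose endpoints are rational directions; in particular 𝒮(𝒰) is a closed subset of S¹. -/

import Mathlib

open scoped BigOperators

/-- Points of the plane lattice ℤ². -/
abbrev Pt : Type := ℤ × ℤ

noncomputable section

/-- Inner product of an integer point with a real vector. -/
def dotIR (x : Pt) (u : ℝ × ℝ) : ℝ := (x.1 : ℝ) * u.1 + (x.2 : ℝ) * u.2

/-- Inner product of two real vectors. -/
def dotRR (u v : ℝ × ℝ) : ℝ := u.1 * v.1 + u.2 * v.2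

/-- The unit circle S¹ ⊆ ℝ². -/
def unitCircle : Set (ℝ × ℝ) := {u | u.1 ^ 2 + u.2 ^ 2 = 1}

/-- The discrete half-plane H_u = {x ∈ ℤ² : ⟨x,u⟩ < 0}. -/
def halfPlane (u : ℝ × ℝ) : Set Pt := {x | dotIR x u < 0}

/-- An update family: a finite nonempty family of finite subsets of ℤ²∖{0}. -/
def UpdateFamily (𝒰 : Finset (Finset Pt)) : Prop :=
  𝒰.Nonempty ∧ ∀ X ∈ 𝒰, (0 : Pt) ∉ X

/-- One step of 𝒰-bootstrap percolation. -/
def bootStep (𝒰 : Finset (Finset Pt)) (A : Set Pt) : Set Pt :=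
  A ∪ {x : Pt | ∃ X ∈ 𝒰, ∀ v ∈ X, x + v ∈ A}

/-- Iterates of 𝒰-bootstrap percolation. -/
def bootIter (𝒰 : Finset (Finset Pt)) : ℕ → Set Pt → Set Pt
  | 0, A => A
  | n + 1, A => bootStep 𝒰 (bootIter 𝒰 n A)

/-- The 𝒰-bootstrap closure [A] = ⋃_t A_t. -/
def bootClosure (𝒰 : Finset (Finset Pt)) (A : Set Pt) : Set Pt :=
  ⋃ n : ℕ, bootIter 𝒰 n A

/-- The stable set 𝒮(𝒰) = {u ∈ S¹ : X ⊄ H_u for all X ∈ 𝒰}. -/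
def stableSet (𝒰 : Finset (Finset Pt)) : Set (ℝ × ℝ) :=
  {u | u ∈ unitCircle ∧ ∀ X ∈ 𝒰, ¬((X : Set Pt) ⊆ halfPlane u)}

/-- A rational direction: u = z/‖z‖ for some z ∈ ℤ²∖{0}. -/
def IsRationalDir (u : ℝ × ℝ) : Prop :=
  ∃ z : Pt, z ≠ 0 ∧
    u = ((z.1 : ℝ) / Real.sqrt ((z.1 : ℝ) ^ 2 + (z.2 : ℝ) ^ 2),
         (z.2 : ℝ) / Real.sqrt ((z.1 : ℝ) ^ 2 + (z.2 : ℝ) ^ 2))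

/-- Critical family: some (closed) semicircle meets 𝒮(𝒰) in a finite set and every open
semicircle meets 𝒮(𝒰). -/
def Critical (𝒰 : Finset (Finset Pt)) : Prop :=
  (∃ u ∈ unitCircle, (stableSet 𝒰 ∩ {w | 0 ≤ dotRR u w}).Finite) ∧
  ∀ u ∈ unitCircle, (stableSet 𝒰 ∩ {w | 0 < dotRR u w}).Nonempty

/-- Supercritical family: some open semicircle is disjoint from 𝒮(𝒰). -/
def Supercritical (𝒰 : Finset (Finset Pt)) : Prop :=
  ∃ u ∈ unitCircle, stableSet 𝒰 ∩ {w | 0 < dotRR u w} = ∅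

/-- Subcritical family: every semicircle has infinite intersection with 𝒮(𝒰). -/
def Subcritical (𝒰 : Finset (Finset Pt)) : Prop :=
  ∀ u ∈ unitCircle, (stableSet 𝒰 ∩ {w | 0 ≤ dotRR u w}).Infinite

/-- The translated half-plane H_u + a. -/
def translHalfPlane (u : ℝ × ℝ) (a : Pt) : Set Pt := {x | dotIR (x - a) u < 0}

/-- A 𝒯-droplet: a nonempty intersection ⋂_{u ∈ 𝒯} (H_u + a_u). -/
def IsDroplet (𝒯 : Finset (ℝ × ℝ)) (D : Set Pt) : Prop :=
  D.Nonempty ∧ ∃ a : (ℝ × ℝ) → Pt, D = ⋂ u ∈ 𝒯, translHalfPlane u (a u)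

/-- Euclidean distance between two lattice points. -/
def edist2 (x y : Pt) : ℝ :=
  Real.sqrt (((x.1 : ℝ) - (y.1 : ℝ)) ^ 2 + ((x.2 : ℝ) - (y.2 : ℝ)) ^ 2)

/-- Diameter of a set of lattice points (w.r.t. the Euclidean distance). -/
def diam (D : Set Pt) : ℝ :=
  sSup {d : ℝ | ∃ x ∈ D, ∃ y ∈ D, d = edist2 x y}

/-- Translate of a set of lattice points. -/
def translatePt (a : Pt) (D : Set Pt) : Set Pt := (fun x => a + x) '' D

/-- The initial collection of the covering algorithm: one copy of D̂ per element of A. -/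
def initColl (Dhat : Set Pt) (A : Finset Pt) : Multiset (Set Pt) :=
  A.val.map (fun a => translatePt a Dhat)

/-- Two sets lie within Euclidean distance κ of each other. -/
def DropletsClose (κ : ℝ) (D E : Set Pt) : Prop :=
  ∃ x ∈ D, ∃ y ∈ E, edist2 x y ≤ κ

/-- D is the smallest 𝒯-droplet containing S. -/
def SmallestDroplet (𝒯 : Finset (ℝ × ℝ)) (S : Set Pt) (D : Set Pt) : Prop :=
  IsDroplet 𝒯 D ∧ S ⊆ D ∧ ∀ D' : Set Pt, IsDroplet 𝒯 D' → S ⊆ D' → D ⊆ D'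

/-- One merging step of the covering algorithm. -/
def MergeStep (κ : ℝ) (𝒯 : Finset (ℝ × ℝ)) (C C' : Multiset (Set Pt)) : Prop :=
  ∃ (D₁ D₂ D₃ : Set Pt) (C₀ : Multiset (Set Pt)),
    C = D₁ ::ₘ D₂ ::ₘ C₀ ∧ DropletsClose κ D₁ D₂ ∧
    SmallestDroplet 𝒯 (D₁ ∪ D₂) D₃ ∧ C' = D₃ ::ₘ C₀

/-- A terminal collection: all pairwise distances exceed κ. -/
def TerminalColl (κ : ℝ) (C : Multiset (Set Pt)) : Prop :=
  ∀ (D₁ D₂ : Set Pt) (C₀ : Multiset (Set Pt)),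
    C = D₁ ::ₘ D₂ ::ₘ C₀ → ¬ DropletsClose κ D₁ D₂

/-- D̂ is a valid base droplet for the covering algorithm with parameter κ:
a finite 𝒯-droplet containing 0 with κ/2 ≤ diam(D̂) ≤ κ. -/
def GoodBase (κ : ℝ) (𝒯 : Finset (ℝ × ℝ)) (Dhat : Set Pt) : Prop :=
  IsDroplet 𝒯 Dhat ∧ Dhat.Finite ∧ (0 : Pt) ∈ Dhat ∧ κ / 2 ≤ diam Dhat ∧ diam Dhat ≤ κ

/-- The collection C is reachable by the covering algorithm started from A. -/
def Reachable (κ : ℝ) (𝒯 : Finset (ℝ × ℝ)) (Dhat : Set Pt) (A : Finset Pt)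
    (C : Multiset (Set Pt)) : Prop :=
  Relation.ReflTransGen (MergeStep κ 𝒯) (initColl Dhat A) C

/-- A droplet is covered by A if it belongs to some collection arising during some
execution of the covering algorithm. -/
def CoveredBy (κ : ℝ) (𝒯 : Finset (ℝ × ℝ)) (Dhat : Set Pt) (A : Finset Pt)
    (D : Set Pt) : Prop :=
  ∃ C : Multiset (Set Pt), Reachable κ 𝒯 Dhat A C ∧ D ∈ C

/-- The lattice line l_y = {x ∈ ℤ² : ⟨x,y⟩ = 0}. -/
def lineLat (y : ℝ × ℝ) : Set Pt := {x | dotIR x y = 0}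

/-- w generates the rank-one lattice l_y. -/
def GeneratesLine (w : Pt) (y : ℝ × ℝ) : Prop :=
  lineLat y = Set.range (fun k : ℤ => ((k * w.1, k * w.2) : Pt))

/-- The segment Y = {z₀ + j·w : 0 ≤ j < L} of L consecutive points of l_y. -/
def segmentY (z₀ w : Pt) (L : ℕ) : Finset Pt :=
  (Finset.range L).image (fun j : ℕ => ((z₀.1 + (j : ℤ) * w.1, z₀.2 + (j : ℤ) * w.2) : Pt))

open Classical in
/-- The configuration of ℤ² determined by η ∈ {+,−}^Y: state − (false) on H_y, the values of η
on Y, and + (true) elsewhere. -/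
def sigmaCfg (y : ℝ × ℝ) (Y : Finset Pt) (η : Pt → Bool) (x : Pt) : Bool :=
  if x ∈ halfPlane y then false else if x ∈ Y then η x else true

/-- r_v(η): the number of rules X ∈ 𝒰 such that every point of v + X has state opposite
to that of v (in the configuration σ_η). -/
def rval (𝒰 : Finset (Finset Pt)) (y : ℝ × ℝ) (Y : Finset Pt) (η : Pt → Bool) (v : Pt) : ℕ :=
  {X : Finset Pt | X ∈ 𝒰 ∧ ∀ p ∈ X, sigmaCfg y Y η (v + p) = !(sigmaCfg y Y η v)}.ncard

/-- η with the state at v flipped. -/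
def flipAt (η : Pt → Bool) (v : Pt) : Pt → Bool := fun x => if x = v then !(η x) else η x

/-- The generator 𝕍 of the restricted 1-dimensional 𝒰-voter dynamics on Y. -/
def genV (𝒰 : Finset (Finset Pt)) (y : ℝ × ℝ) (Y : Finset Pt)
    (g : (Pt → Bool) → ℝ) (η : Pt → Bool) : ℝ :=
  ∑ v ∈ Y, ((rval 𝒰 y Y η v : ℝ) / (𝒰.card : ℝ)) * (g (flipAt η v) - g η)

/-- The natural projection ℤ² → ℤ²_n. -/
def torusProj (n : ℕ) (v : Pt) : ZMod n × ZMod n := ((v.1 : ZMod n), (v.2 : ZMod n))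

/-- One step of 𝒰-bootstrap percolation on the torus ℤ²_n. -/
def torusStep (n : ℕ) (𝒰 : Finset (Finset Pt)) (A : Set (ZMod n × ZMod n)) :
    Set (ZMod n × ZMod n) :=
  A ∪ {x | ∃ X ∈ 𝒰, ∀ v ∈ X, x + torusProj n v ∈ A}

/-- Iterates of 𝒰-bootstrap percolation on the torus. -/
def torusIter (n : ℕ) (𝒰 : Finset (Finset Pt)) :
    ℕ → Set (ZMod n × ZMod n) → Set (ZMod n × ZMod n)
  | 0, A => A
  | t + 1, A => torusStep n 𝒰 (torusIter n 𝒰 t A)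

/-- The 𝒰-bootstrap closure on the torus. -/
def torusClosure (n : ℕ) (𝒰 : Finset (Finset Pt)) (A : Set (ZMod n × ZMod n)) :
    Set (ZMod n × ZMod n) :=
  ⋃ t : ℕ, torusIter n 𝒰 t A

open Classical in
/-- ℙ_p([A] = ℤ²_n) for a p-random subset A of ℤ²_n (Bernoulli product measure written as
a finite sum over configurations). -/
def percProb (n : ℕ) (𝒰 : Finset (Finset Pt)) (p : ℝ) : ℝ :=
  if h : n = 0 then 0 else
    haveI : NeZero n := ⟨h⟩
    ∑ ω : ZMod n × ZMod n → Bool,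
      (if torusClosure n 𝒰 {x | ω x = true} = Set.univ then (1 : ℝ) else 0) *
        p ^ (Finset.univ.filter (fun x => ω x = true)).card *
        (1 - p) ^ (Finset.univ.filter (fun x => ω x = false)).card

/-- The critical probability p_c(ℤ²_n, 𝒰). -/
def pCrit (n : ℕ) (𝒰 : Finset (Finset Pt)) : ℝ :=
  sInf {p : ℝ | p ∈ Set.Icc (0 : ℝ) 1 ∧ 1 / 2 ≤ percProb n 𝒰 p}

/-- The point of S¹ at angle θ. -/
def circlePt (θ : ℝ) : ℝ × ℝ := (Real.cos θ, Real.sin θ)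

end

noncomputable section Aux

lemma circlePt_mem_unitCircle (θ : ℝ) : circlePt θ ∈ unitCircle := by
  simp [circlePt, unitCircle, Real.cos_sq_add_sin_sq]

lemma exists_angle {u : ℝ × ℝ} (hu : u ∈ unitCircle) : ∃ θ, circlePt θ = u := by
  set z : ℂ := ⟨u.1, u.2⟩ with hz
  have habs : ‖z‖ = 1 := by
    simp only [Complex.norm_def, Complex.normSq_mk, hz]
    rw [show u.1 * u.1 + u.2 * u.2 = 1 by nlinarith [hu.out]]
    exact Real.sqrt_one
  have hzne : z ≠ 0 := by
    intro h; rw [h] at habs; simp at habs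
  refine ⟨Complex.arg z, ?_⟩
  have hc := Complex.cos_arg hzne
  have hs := Complex.sin_arg z
  rw [habs] at hc hs
  simp only [div_one] at hc hs
  simp only [circlePt, hc, hs]
  simp [hz]

lemma stableSet_eq (𝒰 : Finset (Finset Pt)) :
    stableSet 𝒰 = unitCircle ∩ ⋂ X ∈ 𝒰, ⋃ x ∈ X, {u : ℝ × ℝ | 0 ≤ dotIR x u} := by
  ext u
  simp only [stableSet, Set.mem_setOf_eq, Set.mem_inter_iff, Set.mem_iInter, Set.mem_iUnion,
    Set.mem_setOf_eq]
  refine and_congr_right fun _ => forall_congr' fun X => forall_congr' fun _ => ?_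
  rw [Set.not_subset]
  constructor
  · rintro ⟨x, hx, hx2⟩
    exact ⟨x, by simpa using hx, le_of_not_gt (by simpa [halfPlane] using hx2)⟩
  · rintro ⟨x, hx, hx2⟩
    exact ⟨x, by simpa using hx, by simp [halfPlane]; linarith⟩

lemma continuous_dot (x : Pt) : Continuous fun u : ℝ × ℝ => dotIR x u := by
  unfold dotIR; fun_prop

lemma isClosed_stableSet (𝒰 : Finset (Finset Pt)) : IsClosed (stableSet 𝒰) := by
  rw [stableSet_eq]
  apply IsClosed.inter
  · have : unitCircle = (fun u : ℝ × ℝ => u.1 ^ 2 + u.2 ^ 2) ⁻¹' {1} := rfl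
    rw [this]
    exact IsClosed.preimage (by fun_prop) isClosed_singleton
  · apply isClosed_biInter; intro X _
    apply Set.Finite.isClosed_biUnion (X.finite_toSet)
    intro x _
    exact isClosed_le continuous_const (continuous_dot x)

/-- orthogonal classification -/
lemma perp_classify {c d u₁ u₂ : ℝ} (hcd : ¬(c = 0 ∧ d = 0)) (hu : u₁ ^ 2 + u₂ ^ 2 = 1)
    (h : c * u₁ + d * u₂ = 0) :
    (u₁ = -d / Real.sqrt (d ^ 2 + c ^ 2) ∧ u₂ = c / Real.sqrt (d ^ 2 + c ^ 2)) ∨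
    (u₁ = d / Real.sqrt (d ^ 2 + c ^ 2) ∧ u₂ = -c / Real.sqrt (d ^ 2 + c ^ 2)) := by
  have hpos : 0 < d ^ 2 + c ^ 2 := by
    rcases (not_and_or.mp hcd) with h1 | h1 <;> positivity
  set r := Real.sqrt (d ^ 2 + c ^ 2) with hr
  have hrpos : 0 < r := Real.sqrt_pos.mpr hpos
  have hr2 : r ^ 2 = d ^ 2 + c ^ 2 := Real.sq_sqrt hpos.le
  set t := (c * u₂ - d * u₁) / (d ^ 2 + c ^ 2) with ht
  have h1 : u₁ = -d * t := by
    rw [ht]; field_simp; linear_combination c * h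
  have h2 : u₂ = c * t := by
    rw [ht]; field_simp; linear_combination d * h
  have h3 : t ^ 2 * (d ^ 2 + c ^ 2) = 1 := by
    rw [h1, h2] at hu; linear_combination hu
  have h4 : (t * r - 1) * (t * r + 1) = 0 := by nlinarith
  rcases mul_eq_zero.mp h4 with h5 | h5
  · left
    have htr : t = 1 / r := by field_simp; linarith
    rw [h1, h2, htr]
    constructor <;> field_simp
  · right
    have htr : t = -1 / r := by field_simp; linarith
    rw [h1, h2, htr]
    constructor <;> (field_simp; try ring)

/-- angle uniqueness mod 2π -/
lemma angle_unique {θ θ' : ℝ} (hc : Real.cos θ = Real.cos θ') (hs : Real.sin θ = Real.sin θ') :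
    ∃ k : ℤ, θ = θ' + 2 * Real.pi * k := by
  have h : Real.cos (θ - θ') = 1 := by
    rw [Real.cos_sub, hc, hs]
    nlinarith [Real.sin_sq_add_cos_sq θ']
  rw [Real.cos_eq_one_iff] at h
  obtain ⟨n, hn⟩ := h
  exact ⟨n, by linarith⟩

end Aux

noncomputable section Bad
open Real

def allPts (𝒰 : Finset (Finset Pt)) : Finset Pt := 𝒰.biUnion id

def baseAngle (x : Pt) : ℝ := Complex.arg ⟨((-x.2 : ℤ) : ℝ), ((x.1 : ℤ) : ℝ)⟩

def badAngles (𝒰 : Finset (Finset Pt)) : Finset ℝ :=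
  (allPts 𝒰).image (fun x => toIcoMod Real.two_pi_pos 0 (baseAngle x)) ∪
  (allPts 𝒰).image (fun x => toIcoMod Real.two_pi_pos 0 (baseAngle x + Real.pi))

lemma circlePt_toIcoMod (a θ : ℝ) :
    circlePt (toIcoMod Real.two_pi_pos a θ) = circlePt θ := by
  have h : θ - toIcoMod Real.two_pi_pos a θ = toIcoDiv Real.two_pi_pos a θ • (2 * π) :=
    self_sub_toIcoMod Real.two_pi_pos a θ
  have h2 : toIcoMod Real.two_pi_pos a θ = θ - toIcoDiv Real.two_pi_pos a θ • (2 * π) := by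
    linarith [h]
  rw [h2]
  unfold circlePt
  rw [Real.cos_periodic.sub_zsmul_eq, Real.sin_periodic.sub_zsmul_eq]

lemma exists_int_toIcoMod (a θ : ℝ) :
    ∃ k : ℤ, θ = toIcoMod Real.two_pi_pos a θ + 2 * π * k := by
  have h : θ - toIcoMod Real.two_pi_pos a θ = toIcoDiv Real.two_pi_pos a θ • (2 * π) :=
    self_sub_toIcoMod Real.two_pi_pos a θ
  refine ⟨toIcoDiv Real.two_pi_pos a θ, ?_⟩
  rw [zsmul_eq_mul] at h
  linarith [h]

lemma mem_badAngles_Ico {𝒰 : Finset (Finset Pt)} {b : ℝ} (hb : b ∈ badAngles 𝒰) :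
    b ∈ Set.Ico (0:ℝ) (2 * π) := by
  rw [badAngles, Finset.mem_union] at hb
  rcases hb with hb | hb <;>
  · obtain ⟨x, -, rfl⟩ := Finset.mem_image.mp hb
    simpa using toIcoMod_mem_Ico Real.two_pi_pos 0 _

lemma circlePt_baseAngle {x : Pt} (hx : x ≠ 0) :
    circlePt (baseAngle x) =
      ((-x.2 : ℝ) / Real.sqrt ((x.2:ℝ) ^ 2 + (x.1:ℝ) ^ 2),
       (x.1 : ℝ) / Real.sqrt ((x.2:ℝ) ^ 2 + (x.1:ℝ) ^ 2)) := by
  set z : ℂ := ⟨((-x.2 : ℤ) : ℝ), ((x.1 : ℤ) : ℝ)⟩ with hz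
  have hzne : z ≠ 0 := by
    intro h
    apply hx
    have h1 : z.re = 0 := by rw [h]; simp
    have h2 : z.im = 0 := by rw [h]; simp
    rw [hz] at h1 h2
    simp only [Complex.neg_re] at h1 h2
    have : x.2 = 0 := by exact_mod_cast (by push_cast at h1 ⊢; linarith : ((x.2:ℝ)) = 0)
    have : x.1 = 0 := by exact_mod_cast h2
    exact Prod.ext ‹x.1 = 0› ‹x.2 = 0›
  have habs : ‖z‖ = Real.sqrt ((x.2:ℝ) ^ 2 + (x.1:ℝ) ^ 2) := by
    rw [Complex.norm_def, hz]
    congr 1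
    rw [Complex.normSq_mk]
    push_cast
    ring
  have hc := Complex.cos_arg hzne
  have hs := Complex.sin_arg z
  rw [habs] at hc hs
  unfold circlePt baseAngle
  rw [← hz, hc, hs, hz]
  simp only []
  push_cast
  rfl

lemma mem_allPts_ne_zero {𝒰 : Finset (Finset Pt)} (hU : UpdateFamily 𝒰) {x : Pt}
    (hx : x ∈ allPts 𝒰) : x ≠ 0 := by
  rw [allPts, Finset.mem_biUnion] at hx
  obtain ⟨X, hX, hxX⟩ := hx
  intro h; exact hU.2 X hX (h ▸ hxX)

lemma isRatDir_badAngles {𝒰 : Finset (Finset Pt)} (hU : UpdateFamily 𝒰) {b : ℝ}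
    (hb : b ∈ badAngles 𝒰) : IsRationalDir (circlePt b) := by
  rw [badAngles, Finset.mem_union] at hb
  rcases hb with hb | hb <;> obtain ⟨x, hx, rfl⟩ := Finset.mem_image.mp hb <;>
    have hxne := mem_allPts_ne_zero hU hx <;> rw [circlePt_toIcoMod]
  · refine ⟨(-x.2, x.1), ?_, ?_⟩
    · simp [Prod.ext_iff] at hxne ⊢; tauto
    · rw [circlePt_baseAngle hxne]
      simp [Prod.ext_iff, neg_sq]
  · refine ⟨(x.2, -x.1), ?_, ?_⟩
    · simp [Prod.ext_iff] at hxne ⊢; tauto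
    · unfold circlePt
      rw [Real.cos_add_pi, Real.sin_add_pi]
      have := circlePt_baseAngle hxne
      unfold circlePt at this
      rw [Prod.ext_iff] at this
      simp only [] at this
      rw [this.1, this.2]
      simp [Prod.ext_iff, neg_sq, neg_div, neg_neg]

end Bad

noncomputable section Const
open Real

lemma perp_badAngle {𝒰 : Finset (Finset Pt)} (hU : UpdateFamily 𝒰) {x : Pt}
    (hx : x ∈ allPts 𝒰) {θ : ℝ} (h : dotIR x (circlePt θ) = 0) :
    ∃ b ∈ badAngles 𝒰, ∃ k : ℤ, θ = b + 2 * π * k := by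
  have hxne := mem_allPts_ne_zero hU hx
  have hcd : ¬((x.1 : ℝ) = 0 ∧ (x.2 : ℝ) = 0) := by
    rintro ⟨h1, h2⟩
    exact hxne (Prod.ext (by exact_mod_cast h1) (by exact_mod_cast h2))
  have hu : Real.cos θ ^ 2 + Real.sin θ ^ 2 = 1 := Real.cos_sq_add_sin_sq θ
  have h' : (x.1 : ℝ) * Real.cos θ + (x.2 : ℝ) * Real.sin θ = 0 := h
  have hb := circlePt_baseAngle hxne
  rw [Prod.ext_iff] at hb
  simp only [circlePt] at hb
  rcases perp_classify hcd hu h' with ⟨h1, h2⟩ | ⟨h1, h2⟩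
  · -- θ ≡ baseAngle x
    obtain ⟨k, hk⟩ := angle_unique (θ := θ) (θ' := baseAngle x)
      (by rw [h1, hb.1]) (by rw [h2, hb.2])
    refine ⟨toIcoMod Real.two_pi_pos 0 (baseAngle x), ?_, ?_⟩
    · rw [badAngles, Finset.mem_union]; left
      exact Finset.mem_image.mpr ⟨x, hx, rfl⟩
    · obtain ⟨k', hk'⟩ := exists_int_toIcoMod 0 (baseAngle x)
      refine ⟨k' + k, ?_⟩
      push_cast
      linarith [hk, hk']
  · -- θ ≡ baseAngle x + π
    obtain ⟨k, hk⟩ := angle_unique (θ := θ) (θ' := baseAngle x + π)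
      (by rw [Real.cos_add_pi, h1, hb.1]; ring)
      (by rw [Real.sin_add_pi, h2, hb.2]; ring)
    refine ⟨toIcoMod Real.two_pi_pos 0 (baseAngle x + π), ?_, ?_⟩
    · rw [badAngles, Finset.mem_union]; right
      exact Finset.mem_image.mpr ⟨x, hx, rfl⟩
    · obtain ⟨k', hk'⟩ := exists_int_toIcoMod 0 (baseAngle x + π)
      refine ⟨k' + k, ?_⟩
      push_cast
      linarith [hk, hk']

lemma stable_iff (𝒰 : Finset (Finset Pt)) (u : ℝ × ℝ) :
    u ∈ stableSet 𝒰 ↔ u ∈ unitCircle ∧ ∀ X ∈ 𝒰, ∃ x ∈ X, 0 ≤ dotIR x u := by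
  rw [stableSet_eq]
  simp [Set.mem_iInter, Set.mem_iUnion]

lemma continuous_gdot (x : Pt) : Continuous fun θ : ℝ => dotIR x (circlePt θ) := by
  unfold dotIR circlePt
  fun_prop

lemma stable_const (𝒰 : Finset (Finset Pt)) {s t : ℝ} (hst : s ≤ t)
    (h : ∀ x ∈ allPts 𝒰, ∀ ψ ∈ Set.Icc s t, dotIR x (circlePt ψ) ≠ 0) :
    (circlePt s ∈ stableSet 𝒰 ↔ circlePt t ∈ stableSet 𝒰) := by
  have key : ∀ x ∈ allPts 𝒰, (0 ≤ dotIR x (circlePt s) ↔ 0 ≤ dotIR x (circlePt t)) := by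
    intro x hx
    set f := fun θ : ℝ => dotIR x (circlePt θ) with hf
    have hcont : ContinuousOn f (Set.Icc s t) := (continuous_gdot x).continuousOn
    constructor
    · intro h0
      by_contra hneg
      push_neg at hneg
      have h0' : 0 < f s := lt_of_le_of_ne h0 (Ne.symm (h x hx s ⟨le_refl s, hst⟩))
      obtain ⟨ψ, hψ, hψ0⟩ := intermediate_value_Icc' hst hcont
        (show (0:ℝ) ∈ Set.Icc (f t) (f s) from ⟨hneg.le, h0'.le⟩)
      exact h x hx ψ hψ hψ0
    · intro h0
      by_contra hneg
      push_neg at hneg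
      have h0' : 0 < f t := lt_of_le_of_ne h0 (Ne.symm (h x hx t ⟨hst, le_refl t⟩))
      obtain ⟨ψ, hψ, hψ0⟩ := intermediate_value_Icc hst hcont
        (show (0:ℝ) ∈ Set.Icc (f s) (f t) from ⟨hneg.le, h0'.le⟩)
      exact h x hx ψ hψ hψ0
  rw [stable_iff, stable_iff]
  simp only [circlePt_mem_unitCircle, true_and]
  refine forall_congr' fun X => ?_
  refine imp_congr_right fun hX => ?_
  refine exists_congr fun x => ?_
  refine and_congr_right fun hx => ?_
  exact key x (Finset.mem_biUnion.mpr ⟨X, hX, hx⟩)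

end Const

section Main
open Real


/-- the stable set is a finite union of closed arcs of S¹ with rational
endpoints; in particular it is closed. -/
theorem stmt1 (𝒰 : Finset (Finset Pt)) (hU : UpdateFamily 𝒰) :
    (∃ (k : ℕ) (α β : Fin k → ℝ),
      (∀ i, α i ≤ β i ∧ β i ≤ α i + 2 * Real.pi) ∧
      (∀ i, IsRationalDir (circlePt (α i)) ∧ IsRationalDir (circlePt (β i))) ∧
      stableSet 𝒰 = ⋃ i : Fin k, circlePt '' Set.Icc (α i) (β i)) ∧
    IsClosed (stableSet 𝒰) := by
  classical
  refine ⟨?_, isClosed_stableSet 𝒰⟩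
  by_cases hemp : ∃ X ∈ 𝒰, X = ∅
  · -- stable set is empty
    obtain ⟨X, hX, rfl⟩ := hemp
    refine ⟨0, Fin.elim0, Fin.elim0, fun i => i.elim0, fun i => i.elim0, ?_⟩
    have h1 : stableSet 𝒰 = ∅ := by
      ext u
      simp only [stableSet, Set.mem_setOf_eq, Set.mem_empty_iff_false, iff_false, not_and]
      intro _ h
      exact h ∅ hX (by simp)
    rw [h1]
    simp
  · push_neg at hemp
    -- the set of bad angles is nonempty
    obtain ⟨X₀, hX₀⟩ := hU.1
    obtain ⟨x₀, hx₀⟩ := hemp X₀ hX₀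
    have hBAne : (badAngles 𝒰).Nonempty := by
      refine ⟨toIcoMod Real.two_pi_pos 0 (baseAngle x₀), ?_⟩
      rw [badAngles, Finset.mem_union]
      exact Or.inl (Finset.mem_image.mpr ⟨x₀, Finset.mem_biUnion.mpr ⟨X₀, hX₀, hx₀⟩, rfl⟩)
    set m := (badAngles 𝒰).card with hmdef
    have hm : 0 < m := Finset.card_pos.mpr hBAne
    set e := (badAngles 𝒰).orderIsoOfFin rfl with hedef
    set a : ℕ → ℝ := fun i => if h : i < m then (e ⟨i, h⟩ : ℝ) else (e ⟨0, hm⟩ : ℝ) + 2 * π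
      with hadef
    have ha_lt : ∀ i (h : i < m), a i = (e ⟨i, h⟩ : ℝ) := by
      intro i h; simp [hadef, h]
    have ha_m : ∀ i, m ≤ i → a i = a 0 + 2 * π := by
      intro i h
      rw [hadef]
      simp only [dif_neg (not_lt.mpr h), dif_pos hm]
    have ha_memBA : ∀ i (h : i < m), a i ∈ badAngles 𝒰 := by
      intro i h; rw [ha_lt i h]; exact (e ⟨i, h⟩).2
    have ha_Ico : ∀ i (h : i < m), a i ∈ Set.Ico (0:ℝ) (2 * π) :=
      fun i h => mem_badAngles_Ico (ha_memBA i h)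
    have ha0_min : ∀ i (h : i < m), a 0 ≤ a i := by
      intro i h
      rw [ha_lt 0 hm, ha_lt i h]
      exact_mod_cast (e.monotone (by exact Fin.mk_le_mk.mpr (Nat.zero_le i)))
    -- strict monotonicity on [0, m]
    have hamono : ∀ i j, i < j → j ≤ m → a i < a j := by
      intro i j hij hjm
      rcases lt_or_eq_of_le hjm with hjm' | heq
      · rw [ha_lt i (lt_trans hij hjm'), ha_lt j hjm']
        exact_mod_cast e.strictMono (by exact_mod_cast hij)
      · have him : i < m := by omega
        rw [heq, ha_m m le_rfl]
        have h1 := (ha_Ico i him).2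
        have h2 := (ha_Ico 0 hm).1
        linarith
    have hamono' : ∀ i j, i ≤ j → j ≤ m → a i ≤ a j := by
      intro i j hij hjm
      rcases lt_or_eq_of_le hij with h | rfl
      · exact (hamono i j h hjm).le
      · exact le_rfl
    -- no bad directions inside open gaps
    have noBad : ∀ i, i < m → ∀ ψ, a i < ψ → ψ < a (i + 1) →
        ∀ x ∈ allPts 𝒰, dotIR x (circlePt ψ) ≠ 0 := by
      intro i him ψ h1 h2 x hx h0
      obtain ⟨b, hbBA, k, hk⟩ := perp_badAngle hU hx h0
      -- b = a j for some j < m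
      obtain ⟨j, hj⟩ : ∃ j : Fin m, (e j : ℝ) = b := ⟨e.symm ⟨b, hbBA⟩, by simp⟩
      have hjm : (j : ℕ) < m := j.2
      have hb_aj : a (j : ℕ) = b := by
        rw [ha_lt _ hjm]
        have heta : (⟨(j : ℕ), hjm⟩ : Fin m) = j := Fin.eta j hjm
        rw [heta, hj]
      -- bounds forcing k = 0
      have hψlow : a 0 ≤ a i := ha0_min i him
      have hψhigh : a (i+1) ≤ a 0 + 2 * π := by
        rcases lt_or_ge (i+1) m with h | h
        · have := hamono' (i+1) m (le_of_lt h) le_rfl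
          rw [ha_m m le_rfl] at this; linarith
        · rw [ha_m (i+1) h]
      have hb0 : (0:ℝ) ≤ b := (mem_badAngles_Ico hbBA).1
      have ha00 : (0:ℝ) ≤ a 0 := (ha_Ico 0 hm).1
      have hb2 : b < 2 * π := (mem_badAngles_Ico hbBA).2
      have ha0b : a 0 ≤ b := by rw [← hb_aj]; exact ha0_min _ hjm
      have hk0 : k = 0 := by
        have hlt1 : (k : ℝ) < 1 := by nlinarith [Real.pi_pos]
        have hgt1 : (-1 : ℝ) < k := by nlinarith [Real.pi_pos, ha00]
        have : (-1 : ℤ) < k := by exact_mod_cast hgt1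
        have : k < 1 := by exact_mod_cast hlt1
        omega
      rw [hk0] at hk
      push_cast at hk
      have hψb : ψ = b := by linarith
      rw [hψb, ← hb_aj] at h1 h2
      -- a i < a j < a (i+1) : contradiction
      have hij : i < (j:ℕ) := by
        by_contra hcon
        push_neg at hcon
        exact absurd (hamono' _ _ hcon (le_of_lt him)) (not_le.mpr h1)
      have : a (i+1) ≤ a (j:ℕ) := hamono' (i+1) (j:ℕ) hij (le_of_lt hjm)
      linarith
    -- constancy of stability inside open gaps
    have constIoo : ∀ i, i < m → ∀ θ θ', θ ∈ Set.Ioo (a i) (a (i+1)) →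
        θ' ∈ Set.Ioo (a i) (a (i+1)) →
        (circlePt θ ∈ stableSet 𝒰 ↔ circlePt θ' ∈ stableSet 𝒰) := by
      intro i him θ θ' hθ hθ'
      rcases le_total θ θ' with h | h
      · exact stable_const 𝒰 h (fun x hx ψ hψ =>
          noBad i him ψ (lt_of_lt_of_le hθ.1 hψ.1) (lt_of_le_of_lt hψ.2 hθ'.2) x hx)
      · exact (stable_const 𝒰 h (fun x hx ψ hψ =>
          noBad i him ψ (lt_of_lt_of_le hθ'.1 hψ.1) (lt_of_le_of_lt hψ.2 hθ.2) x hx)).symm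
    -- preimage of the stable set is closed
    have hTclosed : IsClosed (circlePt ⁻¹' stableSet 𝒰) :=
      (isClosed_stableSet 𝒰).preimage (by unfold circlePt; fun_prop)
    -- If the midpoint is stable, the whole closed gap is stable
    have IccSub : ∀ i, i < m → circlePt ((a i + a (i+1)) / 2) ∈ stableSet 𝒰 →
        ∀ θ ∈ Set.Icc (a i) (a (i+1)), circlePt θ ∈ stableSet 𝒰 := by
      intro i him hmid
      have hlt : a i < a (i+1) := hamono i (i+1) (by omega) him
      have hmidIoo : (a i + a (i+1)) / 2 ∈ Set.Ioo (a i) (a (i+1)) := ⟨by linarith, by linarith⟩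
      have hIoo : Set.Ioo (a i) (a (i+1)) ⊆ circlePt ⁻¹' stableSet 𝒰 := by
        intro θ hθ
        exact (constIoo i him θ _ hθ hmidIoo).mpr hmid
      have : Set.Icc (a i) (a (i+1)) ⊆ circlePt ⁻¹' stableSet 𝒰 := by
        rw [← closure_Ioo (ne_of_lt hlt)]
        exact closure_minimal hIoo hTclosed
      exact fun θ hθ => this hθ
    -- covering of [a 0, a m)
    have cover : ∀ θ, a 0 ≤ θ → θ < a m →
        ∃ i, i < m ∧ (θ = a i ∨ (a i < θ ∧ θ < a (i+1))) := by
      intro θ hθ0 hθm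
      set F := (Finset.range (m+1)).filter (fun i => a i ≤ θ) with hF
      have hFne : F.Nonempty := ⟨0, by simp [hF, hθ0, Nat.succ_pos]⟩
      set i₀ := F.max' hFne with hi₀
      have hi₀mem : i₀ ∈ F := F.max'_mem hFne
      have hi₀le : a i₀ ≤ θ := (Finset.mem_filter.mp hi₀mem).2
      have hi₀range : i₀ < m + 1 := Finset.mem_range.mp (Finset.mem_filter.mp hi₀mem).1
      have hi₀m : i₀ < m := by
        rcases lt_or_eq_of_le (Nat.lt_succ_iff.mp hi₀range) with h | h
        · exact h
        · exfalso; rw [h] at hi₀le; linarith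
      have hnext : θ < a (i₀ + 1) := by
        by_contra hcon
        push_neg at hcon
        have : i₀ + 1 ∈ F := Finset.mem_filter.mpr ⟨Finset.mem_range.mpr (by omega), hcon⟩
        have := F.le_max' _ this
        omega
      rcases eq_or_lt_of_le hi₀le with h | h
      · exact ⟨i₀, hi₀m, Or.inl h.symm⟩
      · exact ⟨i₀, hi₀m, Or.inr ⟨h, hnext⟩⟩
    -- the indexed family of candidate arcs
    set L : Fin m ⊕ Fin m → ℝ := fun j => match j with
      | Sum.inl i => a i
      | Sum.inr i => a i with hL
    set R : Fin m ⊕ Fin m → ℝ := fun j => match j with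
      | Sum.inl i => a ((i : ℕ) + 1)
      | Sum.inr i => a i with hR
    set S : Finset (Fin m ⊕ Fin m) := Finset.univ.filter (fun j => match j with
      | Sum.inl i => circlePt ((a i + a ((i:ℕ)+1)) / 2) ∈ stableSet 𝒰
      | Sum.inr i => circlePt (a i) ∈ stableSet 𝒰) with hS
    have hSel : ∀ j, j ∈ S ↔ (match j with
      | Sum.inl i => circlePt ((a i + a ((i:ℕ)+1)) / 2) ∈ stableSet 𝒰
      | Sum.inr i => circlePt (a i) ∈ stableSet 𝒰) := by
      intro j; simp [hS]
    -- main set equality with biUnion over S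
    have hmain : stableSet 𝒰 = ⋃ j ∈ S, circlePt '' Set.Icc (L j) (R j) := by
      apply Set.Subset.antisymm
      · intro u hu
        obtain ⟨θ₀, hθ₀⟩ := exists_angle hu.1
        set θ := toIcoMod Real.two_pi_pos (a 0) θ₀ with hθdef
        have hcp : circlePt θ = u := by rw [hθdef, circlePt_toIcoMod, hθ₀]
        have hmem : θ ∈ Set.Ico (a 0) (a 0 + 2 * π) := toIcoMod_mem_Ico _ _ _
        have hθm : θ < a m := by rw [ha_m m le_rfl]; exact hmem.2
        obtain ⟨i, him, hcase⟩ := cover θ hmem.1 hθm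
        rcases hcase with h | h
        · -- θ = a i : degenerate arc
          refine Set.mem_iUnion₂.mpr ⟨Sum.inr ⟨i, him⟩, ?_, ?_⟩
          · rw [hSel]
            simpa using (by rw [← h, hcp]; exact hu : circlePt (a i) ∈ stableSet 𝒰)
          · exact ⟨θ, by simp [hL, hR, h], hcp⟩
        · -- θ in open gap : interval arc
          have hlt : a i < a (i+1) := hamono i (i+1) (by omega) him
          have hmid : circlePt ((a i + a (i+1)) / 2) ∈ stableSet 𝒰 := by
            refine (constIoo i him θ _ ⟨h.1, h.2⟩ ⟨by linarith, by linarith⟩).mp ?_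
            rw [hcp]; exact hu
          refine Set.mem_iUnion₂.mpr ⟨Sum.inl ⟨i, him⟩, ?_, ?_⟩
          · rw [hSel]; simpa using hmid
          · exact ⟨θ, by simp [hL, hR]; constructor <;> linarith [h.1, h.2], hcp⟩
      · intro u hu
        rw [Set.mem_iUnion₂] at hu
        obtain ⟨j, hjS, hju⟩ := hu
        rcases j with i | i
        · have hmid := (hSel (Sum.inl i)).mp hjS
          simp only [] at hmid
          obtain ⟨θ, hθ, rfl⟩ := hju
          exact IccSub i i.2 hmid θ (by simpa [hL, hR] using hθ)
        · have hpt := (hSel (Sum.inr i)).mp hjS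
          simp only [] at hpt
          obtain ⟨θ, hθ, rfl⟩ := hju
          have : θ = a i := le_antisymm (by simpa [hL, hR] using hθ.2) (by simpa [hL, hR] using hθ.1)
          rw [this]; exact hpt
    -- rationality of endpoints
    have hratA : ∀ i, i < m → IsRationalDir (circlePt (a i)) :=
      fun i h => isRatDir_badAngles hU (ha_memBA i h)
    have hratm : ∀ i, m ≤ i → IsRationalDir (circlePt (a i)) := by
      intro i h
      rw [ha_m i h]
      have : circlePt (a 0 + 2 * π) = circlePt (a 0) := by
        unfold circlePt
        rw [Real.cos_add_two_pi, Real.sin_add_two_pi]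
      rw [this]
      exact hratA 0 hm
    have hrat : ∀ i, IsRationalDir (circlePt (a i)) := by
      intro i
      rcases lt_or_ge i m with h | h
      · exact hratA i h
      · exact hratm i h
    -- package into Fin k
    refine ⟨S.card, fun i => L (S.equivFin.symm i), fun i => R (S.equivFin.symm i), ?_, ?_, ?_⟩
    · intro i
      rcases hjj : (S.equivFin.symm i : Fin m ⊕ Fin m) with j | j
      · simp only [hjj, hL, hR]
        constructor
        · exact (hamono j (j+1) (by omega) j.2).le
        · have h1 : a ((j:ℕ)+1) ≤ a m := hamono' _ _ j.2 le_rfl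
          have h2 : a 0 ≤ a (j:ℕ) := ha0_min _ j.2
          rw [ha_m m le_rfl] at h1
          linarith
      · simp only [hjj, hL, hR]
        constructor
        · exact le_rfl
        · linarith [Real.two_pi_pos]
    · intro i
      rcases hjj : (S.equivFin.symm i : Fin m ⊕ Fin m) with j | j <;>
        simp only [hjj, hL, hR] <;> exact ⟨hrat _, hrat _⟩
    · rw [hmain]
      ext u
      simp only [Set.mem_iUnion, Set.mem_iUnion₂]
      constructor
      · rintro ⟨j, hjS, hju⟩
        exact ⟨S.equivFin ⟨j, hjS⟩, by simpa using hju⟩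
      · rintro ⟨i, hiu⟩
        exact ⟨(S.equivFin.symm i : Fin m ⊕ Fin m), (S.equivFin.symm i).2, hiu⟩
end Main
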